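/- A real Hankel matrix is positive semidefinite if and only if it is a positive combination of moment vectors: let M be an N×N real matrix that is Hankel, i.e. there is a : Fin (2N−1) → ℝ with M(i,j) = a(i+j) for all i,j. Then M is positive semidefinite if and only if there exist r = rank M, positive reals λ_1,…,λ_r, and vectors z_1,…,z_r ∈ ℝ^N, each z_i being either of the form z_i = (1, t_i, t_i², …, t_i^{N−1}) for some t_i ∈ ℝ or equal to the last standard basis vector e_{N−1} = (0,…,0,1), such that M = ∑_{i=1}^{r} λ_i · z_i z_iᵀ. -/

import Mathlib

open Polynomial Matrix Finset Module

set_option linter.unusedSectionVars false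
set_option maxHeartbeats 1600000

namespace Stmt19

section PSD
variable {n : Type*} [Fintype n] [DecidableEq n]

lemma dot_sym (M : Matrix n n ℝ) (hs : Mᵀ = M) (x y : n → ℝ) :
    x ⬝ᵥ M *ᵥ y = y ⬝ᵥ M *ᵥ x := by
  rw [Matrix.dotProduct_mulVec]
  nth_rewrite 1 [← hs]
  rw [Matrix.vecMul_transpose, dotProduct_comm]

lemma psd_quad (M : Matrix n n ℝ) (hs : Mᵀ = M) (hpsd : ∀ x, 0 ≤ x ⬝ᵥ M *ᵥ x)
    (x y : n → ℝ) (c : ℝ) :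
    0 ≤ x ⬝ᵥ M *ᵥ x + 2 * c * (y ⬝ᵥ M *ᵥ x) + c ^ 2 * (y ⬝ᵥ M *ᵥ y) := by
  have h := hpsd (x + c • y)
  have e1 : (x + c • y) ⬝ᵥ M *ᵥ (x + c • y)
      = x ⬝ᵥ M *ᵥ x + c * (y ⬝ᵥ M *ᵥ x) + (c * (x ⬝ᵥ M *ᵥ y) + c * c * (y ⬝ᵥ M *ᵥ y)) := by
    rw [Matrix.mulVec_add, Matrix.mulVec_smul, add_dotProduct, smul_dotProduct,
      dotProduct_add, dotProduct_add, dotProduct_smul,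
      dotProduct_smul]
    simp [smul_eq_mul]; ring
  rw [e1, dot_sym M hs x y] at h
  nlinarith [h]

lemma psd_cs (M : Matrix n n ℝ) (hs : Mᵀ = M) (hpsd : ∀ x, 0 ≤ x ⬝ᵥ M *ᵥ x)
    (x y : n → ℝ) :
    (y ⬝ᵥ M *ᵥ x) ^ 2 ≤ (x ⬝ᵥ M *ᵥ x) * (y ⬝ᵥ M *ᵥ y) := by
  set p := x ⬝ᵥ M *ᵥ x
  set q := y ⬝ᵥ M *ᵥ y
  set b := y ⬝ᵥ M *ᵥ x
  have hq : 0 ≤ q := hpsd y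
  rcases eq_or_lt_of_le hq with hq0 | hq0
  · have hb : b = 0 := by
      by_contra hb
      have h := psd_quad M hs hpsd x y (-(p + 1) / (2 * b))
      have h' : 0 ≤ p + 2 * (-(p + 1) / (2 * b)) * b + (-(p + 1) / (2 * b)) ^ 2 * q := h
      rw [← hq0, mul_zero] at h'
      have hc : 2 * (-(p + 1) / (2 * b)) * b = -(p + 1) := by field_simp
      rw [hc] at h'
      linarith
    simp [hb]
    nlinarith [hpsd x]
  · have h := psd_quad M hs hpsd x y (-b / q)
    have : p + 2 * (-b / q) * b + (-b / q) ^ 2 * q = p - b ^ 2 / q := by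
      field_simp; ring
    rw [this] at h
    have := mul_le_mul_of_nonneg_right h (le_of_lt hq0)
    calc b ^ 2 = b ^ 2 / q * q := by field_simp
    _ ≤ p * q := by nlinarith [h, hq0]

lemma psd_null (M : Matrix n n ℝ) (hs : Mᵀ = M) (hpsd : ∀ x, 0 ≤ x ⬝ᵥ M *ᵥ x)
    (x : n → ℝ) (hx : x ⬝ᵥ M *ᵥ x = 0) : M *ᵥ x = 0 := by
  funext i
  have h := psd_cs M hs hpsd x (Pi.single i 1)
  rw [hx] at h
  simp only [zero_mul] at h
  have hb : Pi.single i 1 ⬝ᵥ M *ᵥ x = 0 := by nlinarith [sq_nonneg (Pi.single i 1 ⬝ᵥ M *ᵥ x)]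
  rw [single_dotProduct] at hb
  simpa using hb

lemma exists_mulVec_eq (M : Matrix n n ℝ) (hs : Mᵀ = M) (z : n → ℝ)
    (hz : ∀ x, M *ᵥ x = 0 → z ⬝ᵥ x = 0) : ∃ w, M *ᵥ w = z := by
  classical
  let E := EuclideanSpace ℝ n
  let f : E →ₗ[ℝ] E := Matrix.toEuclideanLin M
  have hf : ∀ u : E, ((f u : E) : n → ℝ) = M *ᵥ (u : n → ℝ) := fun u => rfl
  have hker : ∀ u : E, u ∈ LinearMap.ker f → M *ᵥ (u : n → ℝ) = 0 := by
    intro u hu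
    rw [← hf, LinearMap.mem_ker.mp hu]; rfl
  have hinner : ∀ u v : E, inner ℝ u v = (u : n → ℝ) ⬝ᵥ (v : n → ℝ) := by
    intro u v
    rw [PiLp.inner_apply]
    simp [dotProduct, mul_comm]
  have hRK : LinearMap.range f ≤ (LinearMap.ker f)ᗮ := by
    rintro _ ⟨x, rfl⟩
    rw [Submodule.mem_orthogonal]
    intro u hu
    have hu' : M *ᵥ (u : n → ℝ) = 0 := hker u hu
    rw [hinner, hf]
    rw [dot_sym M hs, hu', dotProduct_zero]
  have h2 := LinearMap.finrank_range_add_finrank_ker f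
  have h3 := Submodule.finrank_add_finrank_orthogonal (K := LinearMap.ker f)
  have h1 : finrank ℝ ((LinearMap.ker f)ᗮ) ≤ finrank ℝ (LinearMap.range f) := by omega
  have hEq := Submodule.eq_of_le_of_finrank_le hRK h1
  have hzmem : (WithLp.toLp 2 z : E) ∈ (LinearMap.ker f)ᗮ := by
    rw [Submodule.mem_orthogonal]
    intro u hu
    have hu' : M *ᵥ (u : n → ℝ) = 0 := hker u hu
    rw [hinner]
    rw [dotProduct_comm]
    exact hz u hu'
  rw [← hEq] at hzmem
  obtain ⟨w, hw⟩ := hzmem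
  exact ⟨(w : n → ℝ), by rw [← hf, hw]⟩

lemma vecMulVec_mulVec' (z x : n → ℝ) : vecMulVec z z *ᵥ x = (z ⬝ᵥ x) • z := by
  funext i
  simp only [Matrix.mulVec, dotProduct, vecMulVec_apply, Pi.smul_apply, smul_eq_mul,
    Finset.sum_mul]
  exact Finset.sum_congr rfl fun j _ => by ring

lemma deflate (M : Matrix n n ℝ) (hs : Mᵀ = M) (hpsd : ∀ x, 0 ≤ x ⬝ᵥ M *ᵥ x)
    (z w : n → ℝ) (hw : M *ᵥ w = z) (hz : z ≠ 0) :
    0 < w ⬝ᵥ z ∧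
    (∀ x, 0 ≤ x ⬝ᵥ (M - (w ⬝ᵥ z)⁻¹ • vecMulVec z z) *ᵥ x) ∧
    (M - (w ⬝ᵥ z)⁻¹ • vecMulVec z z).rank + 1 = M.rank := by
  have hwz : w ⬝ᵥ z = w ⬝ᵥ M *ᵥ w := by rw [hw]
  have hpos : 0 < w ⬝ᵥ z := by
    rcases eq_or_lt_of_le (hpsd w) with h | h
    · exfalso
      have h0 : M *ᵥ w = 0 := psd_null M hs hpsd w h.symm
      rw [h0] at hw; exact hz hw.symm
    · rw [hwz]; exact h
  set c : ℝ := (w ⬝ᵥ z)⁻¹ with hc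
  have hcpos : 0 < c := inv_pos.mpr hpos
  set M₁ := M - c • vecMulVec z z with hM₁
  have hmv : ∀ x, M₁ *ᵥ x = M *ᵥ x - (c * (z ⬝ᵥ x)) • z := by
    intro x
    rw [hM₁, Matrix.sub_mulVec, Matrix.smul_mulVec, vecMulVec_mulVec', smul_smul]
  have hquad : ∀ x, x ⬝ᵥ M₁ *ᵥ x = x ⬝ᵥ M *ᵥ x - c * (z ⬝ᵥ x) ^ 2 := by
    intro x
    rw [hmv, dotProduct_sub, dotProduct_smul]
    have : x ⬝ᵥ z = z ⬝ᵥ x := dotProduct_comm x z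
    rw [smul_eq_mul, this]; ring
  have hzx : ∀ x, z ⬝ᵥ x = w ⬝ᵥ M *ᵥ x := by
    intro x
    rw [← hw, dotProduct_comm, dot_sym M hs]
  have hpsd1 : ∀ x, 0 ≤ x ⬝ᵥ M₁ *ᵥ x := by
    intro x
    rw [hquad]
    have hcs := psd_cs M hs hpsd x w
    rw [← hwz] at hcs
    rw [hzx]
    have h1 : c * (w ⬝ᵥ M *ᵥ x) ^ 2 ≤ x ⬝ᵥ M *ᵥ x := by
      rw [hc, inv_mul_le_iff₀ hpos]
      calc (w ⬝ᵥ M *ᵥ x) ^ 2 ≤ x ⬝ᵥ M *ᵥ x * (w ⬝ᵥ z) := hcs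
      _ = w ⬝ᵥ z * (x ⬝ᵥ M *ᵥ x) := by ring
      _ ≤ _ := le_refl _
    linarith
  refine ⟨hpos, hpsd1, ?_⟩
  -- rank
  have hrange : LinearMap.range M.mulVecLin ≤ LinearMap.range M₁.mulVecLin ⊔ Submodule.span ℝ {z} := by
    rintro _ ⟨x, rfl⟩
    have : M.mulVecLin x = M₁.mulVecLin x + (c * (z ⬝ᵥ x)) • z := by
      simp only [Matrix.mulVecLin_apply, hmv]; ring_nf
    rw [this]
    exact Submodule.add_mem_sup (LinearMap.mem_range_self _ x)
      (Submodule.smul_mem _ _ (Submodule.mem_span_singleton_self z))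
  have hker : LinearMap.ker M.mulVecLin < LinearMap.ker M₁.mulVecLin := by
    constructor
    · intro x hx
      have hx' : M *ᵥ x = 0 := hx
      have hzx0 : z ⬝ᵥ x = 0 := by rw [hzx, hx', dotProduct_zero]
      show M₁ *ᵥ x = 0
      rw [hmv, hx', hzx0, mul_zero, zero_smul, sub_zero]
    · intro hle
      have hwk : w ∈ LinearMap.ker M₁.mulVecLin := by
        show M₁ *ᵥ w = 0
        rw [hmv, hw, dotProduct_comm z w]
        rw [hc, inv_mul_cancel₀ (ne_of_gt hpos), one_smul, sub_self]
      have hwk' := hle hwk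
      have : M *ᵥ w = 0 := hwk'
      rw [this] at hw; exact hz hw.symm
  have hk := Submodule.finrank_lt_finrank_of_lt hker
  have h2 := LinearMap.finrank_range_add_finrank_ker M.mulVecLin
  have h3 := LinearMap.finrank_range_add_finrank_ker M₁.mulVecLin
  have h4 : finrank ℝ (LinearMap.range M.mulVecLin)
      ≤ finrank ℝ (LinearMap.range M₁.mulVecLin ⊔ Submodule.span ℝ {z} : Submodule ℝ (n → ℝ)) :=
    Submodule.finrank_mono hrange
  have h5 := Submodule.finrank_add_le_finrank_add_finrank
    (LinearMap.range M₁.mulVecLin) (Submodule.span ℝ {z})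
  have h6 : finrank ℝ (Submodule.span ℝ {z}) = 1 := finrank_span_singleton hz
  show M₁.rank + 1 = M.rank
  rw [Matrix.rank, Matrix.rank]
  omega

end PSD

lemma real_of_conj (p : ℂ[X]) (hp : p.map (starRingEnd ℂ) = p) :
    ∃ q : ℝ[X], q.map Complex.ofRealHom = p := by
  classical
  refine ⟨∑ n ∈ p.support, monomial n ((p.coeff n).re), ?_⟩
  have hcoeff : ∀ k, (∑ n ∈ p.support, monomial n ((p.coeff n).re)).coeff k = (p.coeff k).re := by
    intro k
    rw [finset_sum_coeff]
    by_cases hk : k ∈ p.support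
    · rw [Finset.sum_eq_single k]
      · rw [coeff_monomial, if_pos rfl]
      · intro n _ hn; rw [coeff_monomial, if_neg hn]
      · intro h; exact absurd hk h
    · rw [Finset.sum_eq_zero]
      · rw [Polynomial.notMem_support_iff] at hk
        rw [hk]; simp
      · intro n hn
        rw [coeff_monomial, if_neg]
        exact fun h => (h ▸ hk) hn
  ext k
  rw [coeff_map, hcoeff]
  have hreal : (starRingEnd ℂ) (p.coeff k) = p.coeff k := by
    conv_rhs => rw [← hp]
    rw [coeff_map]
  have := Complex.conj_eq_iff_re.mp hreal
  simpa using this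

lemma sos2 (P : ℝ[X]) (hm : P.Monic) (h1 : 1 ≤ P.natDegree)
    (h0 : ∀ x : ℝ, P.eval x ≠ 0) :
    ∃ A B : ℝ[X], P = A * A + B * B ∧ A ≠ 0 ∧
      A.natDegree < P.natDegree ∧ B.natDegree < P.natDegree := by
  classical
  set σ := starRingEnd ℂ with hσ
  set Pc := P.map Complex.ofRealHom with hPcdef
  have hPcm : Pc.Monic := hm.map _
  have hPc0 : Pc ≠ 0 := hPcm.ne_zero
  have hdeg : Pc.natDegree = P.natDegree := natDegree_map _
  have hsplits : Pc.Splits := IsAlgClosed.splits Pc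
  set R := Pc.roots with hRdef
  have hcard : Multiset.card R = P.natDegree := by
    rw [hRdef, splits_iff_card_roots.mp hsplits, hdeg]
  have hconjPc : Pc.map σ = Pc := by
    rw [hPcdef, Polynomial.map_map]
    have hcomp : σ.comp Complex.ofRealHom = Complex.ofRealHom :=
      RingHom.ext fun r => by simp [hσ, Complex.conj_ofReal]
    rw [hcomp]
  have hRconj : R.map σ = R := by
    conv_rhs => rw [hRdef, ← hconjPc]
    rw [hsplits.roots_map_of_injective (RingHom.injective σ)]
  have him : ∀ z ∈ R, z.im ≠ 0 := by
    intro z hz h0'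
    have hzroot : Pc.IsRoot z := isRoot_of_mem_roots hz
    have hz' : z = Complex.ofReal z.re := Complex.ext rfl (by simp [h0'])
    apply h0 z.re
    have heval : Pc.eval z = Complex.ofRealHom (P.eval z.re) := by
      rw [hz', hPcdef, eval_map]
      exact eval₂_at_apply Complex.ofRealHom z.re
    rw [IsRoot.def, heval] at hzroot
    simpa using hzroot
  set S := R.filter (fun z => 0 < z.im) with hSdef
  set T := R.filter (fun z => z.im < 0) with hTdef
  have hST : S + T = R := by
    rw [hSdef, hTdef]
    have h2 : R.filter (fun z => z.im < 0) = R.filter (fun z => ¬ 0 < z.im) := by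
      refine Multiset.filter_congr fun z hz => ?_
      have hzim := him z hz
      constructor
      · intro h; exact not_lt.mpr (le_of_lt h)
      · intro h
        rcases lt_or_gt_of_ne hzim with h' | h'
        · exact h'
        · exact absurd h' h
    rw [h2, Multiset.filter_add_not]
  have hTS : T = S.map σ := by
    have h1 : (R.map σ).filter (fun z => z.im < 0) = T := by rw [hRconj, hTdef]
    rw [← h1, Multiset.filter_map]
    have h2 : R.filter ((fun z : ℂ => z.im < 0) ∘ σ) = S := by
      rw [hSdef]
      refine Multiset.filter_congr fun z hz => ?_
      simp only [Function.comp_apply, hσ, Complex.conj_im]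
      constructor
      · intro h; linarith
      · intro h; linarith
    rw [h2]
  set Q := (S.map (fun z => X - C z)).prod with hQdef
  have hQm : Q.Monic :=
    monic_multiset_prod_of_monic _ _ (fun z _ => monic_X_sub_C z)
  have hQdeg : Q.natDegree = Multiset.card S := by
    rw [hQdef, natDegree_multiset_prod]
    · rw [Multiset.map_map]
      have h3 : (S.map ((fun p : ℂ[X] => p.natDegree) ∘ fun z => X - C z))
          = S.map (fun _ => 1) :=
        Multiset.map_congr rfl fun z _ => natDegree_X_sub_C z
      rw [h3, Multiset.map_const', Multiset.sum_replicate, smul_eq_mul, mul_one]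
    · intro h
      obtain ⟨w, _, hw⟩ := Multiset.mem_map.mp h
      exact X_sub_C_ne_zero w hw
  have hQc0 : Q ≠ 0 := hQm.ne_zero
  have hQQ : (Q.map σ).map σ = Q := by
    rw [Polynomial.map_map]
    have hcomp : (σ : ℂ →+* ℂ).comp σ = RingHom.id ℂ := by
      ext z; simp [hσ]
    rw [hcomp, Polynomial.map_id]
  have hQconj : Q.map σ = (T.map (fun z => X - C z)).prod := by
    rw [hQdef, ← coe_mapRingHom, map_multiset_prod, Multiset.map_map]
    rw [hTS, Multiset.map_map]
    refine congrArg _ (Multiset.map_congr rfl fun z _ => ?_)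
    simp [coe_mapRingHom, Polynomial.map_sub, map_X, map_C]
  have hPQQ : Pc = Q * Q.map σ := by
    have h2 : Pc = (R.map (fun z => X - C z)).prod :=
      hsplits.eq_prod_roots_of_monic hPcm
    rw [h2, ← hST, Multiset.map_add, Multiset.prod_add, ← hQdef, hQconj]
  have hQcdeg : (Q.map σ).natDegree = Multiset.card S := by rw [natDegree_map, hQdeg]
  have hQcm : (Q.map σ).Monic := hQm.map σ
  set m := Multiset.card S with hmdef
  have hm2 : 2 * m = P.natDegree := by
    have h5 := congrArg Multiset.card hST
    rw [Multiset.card_add, hTS, Multiset.card_map] at h5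
    omega
  have hm1 : 1 ≤ m := by omega
  set Ac := Polynomial.C (1/2 : ℂ) * (Q + Q.map σ) with hAcdef
  set Bc := Polynomial.C (Complex.I/2) * (Q.map σ - Q) with hBcdef
  have h4 : (Complex.I/2) * (Complex.I/2) = -(1/4 : ℂ) := by
    rw [div_mul_div_comm, Complex.I_mul_I]
    norm_num
  have key : Ac * Ac + Bc * Bc = Q * Q.map σ := by
    rw [hAcdef, hBcdef]
    calc C (1/2 : ℂ) * (Q + Q.map σ) * (C (1/2) * (Q + Q.map σ))
        + C (Complex.I/2) * (Q.map σ - Q) * (C (Complex.I/2) * (Q.map σ - Q))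
        = C ((1/2 : ℂ) * (1/2)) * ((Q + Q.map σ) * (Q + Q.map σ))
          + C ((Complex.I/2) * (Complex.I/2)) * ((Q.map σ - Q) * (Q.map σ - Q)) := by
          rw [C_mul, C_mul]; ring
      _ = C ((1:ℂ)/4) * ((Q + Q.map σ) * (Q + Q.map σ))
          - C ((1:ℂ)/4) * ((Q.map σ - Q) * (Q.map σ - Q)) := by
          rw [show ((1:ℂ)/2) * (1/2) = 1/4 from by norm_num, h4, map_neg]
          ring
      _ = C ((1:ℂ)/4) * (4 * (Q * Q.map σ)) := by ring
      _ = Q * Q.map σ := by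
          rw [show (4 : ℂ[X]) = C (4:ℂ) from by norm_cast, ← mul_assoc, ← C_mul]
          norm_num
  have hAconj : Ac.map σ = Ac := by
    rw [hAcdef, Polynomial.map_mul, map_C, Polynomial.map_add, hQQ]
    have h5 : σ (1/2 : ℂ) = 1/2 :=
      Complex.conj_eq_iff_im.mpr (by norm_num)
    rw [h5]
    ring
  have hBconj : Bc.map σ = Bc := by
    rw [hBcdef, Polynomial.map_mul, map_C, Polynomial.map_sub, hQQ]
    have h5 : σ (Complex.I/2 : ℂ) = -(Complex.I/2) := by
      rw [hσ, map_div₀, Complex.conj_I,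
        show (starRingEnd ℂ) 2 = 2 from Complex.conj_eq_iff_im.mpr (by norm_num)]
      ring
    rw [h5, map_neg]
    ring
  obtain ⟨A, hA⟩ := real_of_conj Ac hAconj
  obtain ⟨B, hB⟩ := real_of_conj Bc hBconj
  have hmapinj : Function.Injective (Polynomial.map Complex.ofRealHom) :=
    Polynomial.map_injective _ Complex.ofReal_injective
  have hPAB : P = A * A + B * B := by
    apply hmapinj
    rw [Polynomial.map_add, Polynomial.map_mul, Polynomial.map_mul, hA, hB, key, ← hPQQ, hPcdef]
  have hAcm : Ac.coeff m = 1 := by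
    rw [hAcdef, coeff_C_mul, coeff_add]
    have hq1 : Q.coeff m = 1 := by rw [← hQdeg]; exact hQm.coeff_natDegree
    have hq2 : (Q.map σ).coeff m = 1 := by rw [← hQcdeg]; exact hQcm.coeff_natDegree
    rw [hq1, hq2]
    norm_num
  have hAc0 : Ac ≠ 0 := fun h => by rw [h, coeff_zero] at hAcm; exact zero_ne_one hAcm
  have hA0 : A ≠ 0 := fun h => hAc0 (by rw [← hA, h]; exact Polynomial.map_zero _)
  have hAdeg : A.natDegree ≤ m := by
    have h5 : Ac.natDegree ≤ m := by
      refine le_trans (natDegree_C_mul_le _ _) ?_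
      refine le_trans (natDegree_add_le _ _) ?_
      rw [hQdeg, hQcdeg]
      omega
    have h6 : (A.map Complex.ofRealHom).natDegree = A.natDegree := natDegree_map _
    rw [hA] at h6
    omega
  have hBdeg : B.natDegree ≤ m := by
    have h5 : Bc.natDegree ≤ m := by
      refine le_trans (natDegree_C_mul_le _ _) ?_
      refine le_trans (natDegree_sub_le _ _) ?_
      rw [hQdeg, hQcdeg]
      omega
    have h6 : (B.map Complex.ofRealHom).natDegree = B.natDegree := natDegree_map _
    rw [hB] at h6
    omega
  exact ⟨A, B, hPAB, hA0, by omega, by omega⟩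

section Hankel
variable {N : ℕ} (a : ℕ → ℝ)

/-- coefficients of a polynomial as a vector -/
def toVecL : ℝ[X] →ₗ[ℝ] (Fin N → ℝ) where
  toFun f := fun i => f.coeff i
  map_add' f g := by funext i; simp
  map_smul' c f := by funext i; simp

@[simp] lemma toVecL_apply (f : ℝ[X]) (i : Fin N) : toVecL f i = f.coeff i := rfl

/-- the moment functional -/
def Lam (NN : ℕ) (a : ℕ → ℝ) (f : ℝ[X]) : ℝ := ∑ k ∈ range (2 * NN - 1), f.coeff k * a k

lemma lam_add (f g : ℝ[X]) : Lam N a (f + g) = Lam N a f + Lam N a g := by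
  unfold Lam
  rw [← Finset.sum_add_distrib]
  exact Finset.sum_congr rfl fun k _ => by rw [coeff_add]; ring

lemma lam_sum {ι : Type*} (s : Finset ι) (F : ι → ℝ[X]) :
    Lam N a (∑ i ∈ s, F i) = ∑ i ∈ s, Lam N a (F i) := by
  unfold Lam
  rw [Finset.sum_comm]
  exact Finset.sum_congr rfl fun k _ => by rw [finset_sum_coeff, Finset.sum_mul]

lemma lam_monomial (m : ℕ) (c : ℝ) (hm : m < 2 * N - 1) :
    Lam N a (monomial m c) = c * a m := by
  unfold Lam
  rw [Finset.sum_eq_single m]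
  · rw [coeff_monomial, if_pos rfl]
  · intro k _ hk
    rw [coeff_monomial, if_neg (Ne.symm hk), zero_mul]
  · intro h
    exact absurd (Finset.mem_range.mpr hm) h

lemma fin_double_sum (F : ℕ → ℕ → ℝ) :
    ∑ i : Fin N, ∑ j : Fin N, F i j = ∑ i ∈ range N, ∑ j ∈ range N, F i j := by
  rw [← Fin.sum_univ_eq_sum_range (fun i => ∑ j ∈ range N, F i j) N]
  exact Finset.sum_congr rfl fun i _ => Fin.sum_univ_eq_sum_range (fun j => F i j) N

variable (M : Matrix (Fin N) (Fin N) ℝ)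

lemma lam_mul_eq (hH : ∀ i j : Fin N, M i j = a (i.val + j.val))
    (f g : ℝ[X]) (hf : f.natDegree < N) (hg : g.natDegree < N) :
    Lam N a (f * g) = toVecL g ⬝ᵥ M *ᵥ toVecL f := by
  have rhs : toVecL g ⬝ᵥ M *ᵥ toVecL f
      = ∑ i ∈ range N, ∑ j ∈ range N, g.coeff i * (a (i + j) * f.coeff j) := by
    rw [← fin_double_sum (fun i j => g.coeff i * (a (i + j) * f.coeff j))]
    simp only [dotProduct, Matrix.mulVec, toVecL_apply, hH]
    exact Finset.sum_congr rfl fun i _ => Finset.mul_sum _ _ _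
  rw [rhs]
  have step : Lam N a (f * g) = Lam N a ((∑ i ∈ range N, monomial i (g.coeff i)) *
      (∑ j ∈ range N, monomial j (f.coeff j))) := by
    rw [← f.as_sum_range' N hf, ← g.as_sum_range' N hg, mul_comm]
  rw [step, Finset.sum_mul_sum, lam_sum]
  refine Finset.sum_congr rfl fun i hi => ?_
  rw [lam_sum]
  refine Finset.sum_congr rfl fun j hj => ?_
  rw [monomial_mul_monomial, lam_monomial]
  · ring
  · have := Finset.mem_range.mp hi
    have := Finset.mem_range.mp hj
    omega


/-- vector to polynomial -/
noncomputable def fromVec (x : Fin N → ℝ) : ℝ[X] := ∑ i : Fin N, monomial (i : ℕ) (x i)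

lemma fromVec_toVec (x : Fin N → ℝ) : toVecL (fromVec x) = x := by
  funext i
  rw [toVecL_apply, fromVec, finset_sum_coeff]
  rw [Finset.sum_eq_single i]
  · rw [coeff_monomial, if_pos rfl]
  · intro j _ hj
    rw [coeff_monomial, if_neg]
    exact fun h => hj (Fin.ext h)
  · intro h; exact absurd (Finset.mem_univ i) h

lemma fromVec_degree (x : Fin N → ℝ) : (fromVec x).degree < (N : ℕ) := by
  refine lt_of_le_of_lt (degree_sum_le _ _) ?_
  rw [Finset.sup_lt_iff]
  · intro i _
    exact lt_of_le_of_lt (degree_monomial_le _ _) (by exact_mod_cast i.isLt)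
  · exact WithBot.bot_lt_coe N

lemma fromVec_eval (x : Fin N → ℝ) (t : ℝ) :
    (fromVec x).eval t = ∑ i : Fin N, x i * t ^ (i : ℕ) := by
  rw [fromVec, eval_finset_sum]
  exact Finset.sum_congr rfl fun i _ => by rw [eval_monomial]

section WithM
variable (M : Matrix (Fin N) (Fin N) ℝ)

/-- the kernel of the Hankel form, as polynomials of degree < N -/
noncomputable def Kker : Submodule ℝ ℝ[X] :=
  Polynomial.degreeLT ℝ N ⊓ LinearMap.ker (M.mulVecLin ∘ₗ toVecL)

lemma mem_Kker {f : ℝ[X]} :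
    f ∈ Kker M ↔ f.degree < (N : ℕ) ∧ M *ᵥ toVecL f = 0 := by
  rw [Kker, Submodule.mem_inf, Polynomial.mem_degreeLT, LinearMap.mem_ker,
    LinearMap.comp_apply]
  rfl

lemma Kker_natDegree_lt {f : ℝ[X]} (hN : 0 < N) (hf : f ∈ Kker M) : f.natDegree < N := by
  rcases eq_or_ne f 0 with rfl | h0
  · simpa using hN
  · exact (natDegree_lt_iff_degree_lt h0).mpr ((mem_Kker M).mp hf).1

variable {M}
variable (hN : 0 < N) (hH : ∀ i j : Fin N, M i j = a (i.val + j.val))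
    (hs : Mᵀ = M) (hpsd : ∀ x, 0 ≤ x ⬝ᵥ M *ᵥ x)

include hH in
lemma K_orth {f : ℝ[X]} (hf : f ∈ Kker M) (g : ℝ[X]) (hfd : f.natDegree < N)
    (hg : g.natDegree < N) : Lam N a (f * g) = 0 := by
  rw [lam_mul_eq a M hH f g hfd hg, ((mem_Kker M).mp hf).2, dotProduct_zero]

include hH hpsd in
lemma lam_sq_nonneg (f : ℝ[X]) (hfd : f.natDegree < N) : 0 ≤ Lam N a (f * f) := by
  rw [lam_mul_eq a M hH f f hfd hfd]
  exact hpsd _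

include hH hs hpsd in
lemma K_of_sq {f : ℝ[X]} (hfd : f.degree < (N : ℕ)) (hfd' : f.natDegree < N)
    (h0 : Lam N a (f * f) = 0) : f ∈ Kker M := by
  rw [mem_Kker]
  refine ⟨hfd, psd_null M hs hpsd _ ?_⟩
  rw [← lam_mul_eq a M hH f f hfd' hfd']
  exact h0

include hN hH hs hpsd in
lemma K_shift {f : ℝ[X]} (hf : f ∈ Kker M) (hdeg : f.natDegree + 2 < N) :
    X * f ∈ Kker M := by
  rcases eq_or_ne f 0 with rfl | h0
  · rw [mul_zero]; exact Submodule.zero_mem _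
  have hXf : (X : ℝ[X]) * f ≠ 0 := mul_ne_zero X_ne_zero h0
  have hXfd : (X * f).natDegree < N := by
    refine lt_of_le_of_lt (natDegree_mul_le) ?_
    rw [natDegree_X]; omega
  have hX2fd : (X ^ 2 * f).natDegree < N := by
    refine lt_of_le_of_lt (natDegree_mul_le) ?_
    rw [natDegree_X_pow]; omega
  have heq : (X * f) * (X * f) = f * (X ^ 2 * f) := by ring
  have h0' : Lam N a ((X * f) * (X * f)) = 0 := by
    rw [heq]
    exact K_orth a hH hf (X ^ 2 * f) (Kker_natDegree_lt M hN hf) hX2fd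
  exact K_of_sq a hH hs hpsd ((natDegree_lt_iff_degree_lt hXf).mp hXfd) hXfd h0'

include hN hH hs hpsd in
lemma K_shift_pow {P : ℝ[X]} (hP : P ∈ Kker M) :
    ∀ m : ℕ, P.natDegree + m + 2 ≤ N → X ^ m * P ∈ Kker M := by
  intro m
  induction m with
  | zero => intro _; rw [pow_zero, one_mul]; exact hP
  | succ m ih =>
    intro hm
    have h1 : X ^ (m + 1) * P = X * (X ^ m * P) := by ring
    rw [h1]
    refine K_shift a hN hH hs hpsd (ih (by omega)) ?_
    have : (X ^ m * P).natDegree ≤ m + P.natDegree := by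
      refine le_trans (natDegree_mul_le) ?_
      rw [natDegree_X_pow]
    omega

include hN hH hs hpsd in
theorem key_lemma (hM0 : M ≠ 0)
    (he : ¬ ∃ w, M *ᵥ w = fun p : Fin N => if (p : ℕ) = N - 1 then (1:ℝ) else 0) :
    ∃ t : ℝ, ∃ w, M *ᵥ w = fun p : Fin N => t ^ (p : ℕ) := by
  classical
  set eN : Fin N → ℝ := fun p => if (p : ℕ) = N - 1 then (1:ℝ) else 0 with heN
  have heDot : ∀ x : Fin N → ℝ, eN ⬝ᵥ x = x ⟨N - 1, by omega⟩ := by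
    intro x
    rw [dotProduct, Finset.sum_eq_single (⟨N - 1, by omega⟩ : Fin N)]
    · rw [heN]; simp
    · intro j _ hj
      have hj' : (j : ℕ) ≠ N - 1 := fun h => hj (Fin.ext h)
      rw [heN]; simp [hj']
    · intro h; exact absurd (Finset.mem_univ _) h
  have hx0 : ∃ x : Fin N → ℝ, M *ᵥ x = 0 ∧ x ⟨N - 1, by omega⟩ ≠ 0 := by
    by_contra hcon
    push_neg at hcon
    refine he (exists_mulVec_eq M hs eN ?_)
    intro x hx
    rw [heDot]
    exact hcon x hx
  obtain ⟨x₀, hx₀K, hx₀N⟩ := hx0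
  set Q : ℝ[X] := fromVec x₀ with hQdef
  have hQK : Q ∈ Kker M := by
    rw [mem_Kker]
    exact ⟨fromVec_degree x₀, by rw [hQdef, fromVec_toVec]; exact hx₀K⟩
  have hQc : Q.coeff (N - 1) ≠ 0 := by
    have h1 := congrFun (fromVec_toVec x₀) ⟨N - 1, by omega⟩
    rw [toVecL_apply] at h1
    rw [hQdef]
    exact h1 ▸ hx₀N
  have hQ0 : Q ≠ 0 := fun h => hQc (by rw [h, coeff_zero])
  have hQdeg : Q.natDegree = N - 1 := by
    have h1 : N - 1 ≤ Q.natDegree := le_natDegree_of_ne_zero hQc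
    have h2 : Q.natDegree < N := Kker_natDegree_lt M hN hQK
    omega
  have hEx : ∃ n : ℕ, ∃ f, f ∈ Kker M ∧ f ≠ 0 ∧ f.natDegree = n := ⟨_, Q, hQK, hQ0, rfl⟩
  set d := Nat.find hEx with hddef
  obtain ⟨P₀, hP₀K, hP₀0, hP₀d⟩ := Nat.find_spec hEx
  have hmin : ∀ f, f ∈ Kker M → f ≠ 0 → d ≤ f.natDegree := by
    intro f hf h0
    exact Nat.find_le ⟨f, hf, h0, rfl⟩
  have hdN : d ≤ N - 1 := by
    have := hmin Q hQK hQ0; omega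
  set P : ℝ[X] := P₀ * C (P₀.leadingCoeff)⁻¹ with hPdef
  have hPm : P.Monic := monic_mul_leadingCoeff_inv hP₀0
  have hPK : P ∈ Kker M := by
    rw [hPdef, mul_comm, ← smul_eq_C_mul]
    exact Submodule.smul_mem _ _ hP₀K
  have hP0 : P ≠ 0 := hPm.ne_zero
  have hPdeg : P.natDegree = d := by
    rw [hddef, ← hP₀d]
    exact natDegree_eq_of_degree_eq (degree_mul_leadingCoeff_inv P₀ hP₀0)
  have hshift : ∀ m : ℕ, d + m + 2 ≤ N → X ^ m * P ∈ Kker M := by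
    intro m hm
    exact K_shift_pow a hN hH hs hpsd hPK m (by omega)
  have htop : X ^ (N - 1 - d) * P ∈ Kker M := by
    rcases eq_or_lt_of_le hdN with hEqd | hlt
    · have h0 : N - 1 - d = 0 := by omega
      rw [h0, pow_zero, one_mul]; exact hPK
    · set m := N - 1 - d with hmdef
      set g := Q /ₘ P with hgdef
      set s := Q %ₘ P with hsdef
      have hQsum : s + P * g = Q := modByMonic_add_div Q P
      have hsd : s.degree < P.degree := degree_modByMonic_lt Q hPm
      have hg0 : g ≠ 0 := by
        rw [hgdef, Ne, divByMonic_eq_zero_iff hPm, not_lt, degree_eq_natDegree hP0,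
          degree_eq_natDegree hQ0, hPdeg, hQdeg]
        exact_mod_cast hdN
      have hgdeg : g.natDegree = m := by
        rw [hgdef, natDegree_divByMonic Q hPm, hQdeg, hPdeg]
      set c := g.leadingCoeff with hcdef
      have hc0 : c ≠ 0 := leadingCoeff_ne_zero.mpr hg0
      set glow := g.eraseLead with hglowdef
      have hgsplit : glow + C c * X ^ m = g := by
        rw [hglowdef, hcdef, ← hgdeg]; exact eraseLead_add_C_mul_X_pow g
      have hPlow : P * glow ∈ Kker M := by
        rcases eq_or_ne glow 0 with h0 | h0
        · rw [h0, mul_zero]; exact Submodule.zero_mem _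
        · have hglowd : glow.natDegree < m := by
            have h2 := degree_eraseLead_lt hg0
            rw [← hglowdef] at h2
            have h3 := natDegree_lt_natDegree h0 h2
            omega
          have hexp : P * glow = ∑ j ∈ range m, glow.coeff j • (X ^ j * P) := by
            calc P * glow = P * ∑ j ∈ range m, monomial j (glow.coeff j) := by
                  rw [← glow.as_sum_range' m hglowd]
            _ = ∑ j ∈ range m, glow.coeff j • (X ^ j * P) := by
                  rw [Finset.mul_sum]
                  refine Finset.sum_congr rfl fun j _ => ?_
                  rw [smul_eq_C_mul, ← C_mul_X_pow_eq_monomial]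
                  ring
          rw [hexp]
          refine Submodule.sum_mem _ fun j hj => Submodule.smul_mem _ _ ?_
          have hjm := Finset.mem_range.mp hj
          exact hshift j (by omega)
      set Q₁ := Q - P * glow with hQ₁def
      have hQ₁K : Q₁ ∈ Kker M := Submodule.sub_mem _ hQK hPlow
      have hQ₁eq : Q₁ = P * (C c * X ^ m) + s := by
        rw [hQ₁def, ← hQsum, ← hgsplit]; ring
      have hsN : s.natDegree < N := by
        rcases eq_or_ne s 0 with h0 | h0
        · rw [h0, natDegree_zero]; omega
        · have h1 := natDegree_lt_natDegree h0 hsd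
          omega
      have hL1 : Lam N a (Q₁ * s) = 0 :=
        K_orth a hH hQ₁K s (Kker_natDegree_lt M hN hQ₁K) hsN
      have hL2 : Lam N a (P * (C c * X ^ m * s)) = 0 := by
        refine K_orth a hH hPK _ (by omega) ?_
        calc (C c * X ^ m * s).natDegree ≤ (C c * X ^ m).natDegree + s.natDegree :=
              natDegree_mul_le
        _ < N := by
            have h1 : (C c * X ^ m).natDegree ≤ m := by
              refine le_trans natDegree_mul_le ?_
              rw [natDegree_C, natDegree_X_pow]; omega
            rcases eq_or_ne s 0 with h0 | h0
            · rw [h0, natDegree_zero]; omega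
            · have h2 := natDegree_lt_natDegree h0 hsd
              omega
      have hss : Lam N a (s * s) = 0 := by
        have hsplit : Q₁ * s = P * (C c * X ^ m * s) + s * s := by rw [hQ₁eq]; ring
        rw [hsplit, lam_add] at hL1
        linarith
      have hsK : s ∈ Kker M := by
        refine K_of_sq a hH hs hpsd ?_ hsN hss
        refine lt_trans hsd ?_
        rw [degree_eq_natDegree hP0, hPdeg]
        exact_mod_cast (by omega : d < N)
      have hs0 : s = 0 := by
        by_contra h0
        have h1 := hmin s hsK h0
        have h2 := natDegree_lt_natDegree h0 hsd
        omega
      have hQ₁eq' : Q₁ = C c * (X ^ m * P) := by rw [hQ₁eq, hs0, add_zero]; ring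
      have hXmP : c⁻¹ • Q₁ = X ^ m * P := by
        rw [hQ₁eq', smul_eq_C_mul,
          show C c⁻¹ * (C c * (X ^ m * P)) = C c⁻¹ * C c * (X ^ m * P) from by ring,
          ← C_mul, inv_mul_cancel₀ hc0, C_1, one_mul]
      rw [← hXmP]
      exact Submodule.smul_mem _ _ hQ₁K
  have hshift' : ∀ j : ℕ, j + d + 1 ≤ N → X ^ j * P ∈ Kker M := by
    intro j hj
    rcases eq_or_lt_of_le hj with he' | hlt'
    · have hje : j = N - 1 - d := by omega
      rw [hje]; exact htop
    · exact hshift j (by omega)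
  have hd1 : 1 ≤ d := by
    by_contra hd0
    push_neg at hd0
    have hd0' : P.natDegree = 0 := by omega
    have hP1 : P = 1 := hPm.natDegree_eq_zero.mp hd0'
    have hcols : ∀ j : Fin N, M *ᵥ Pi.single j 1 = 0 := by
      intro j
      have hXj : (X : ℝ[X]) ^ (j : ℕ) ∈ Kker M := by
        have h1 := hshift' j (by have := j.isLt; omega)
        rwa [hP1, mul_one] at h1
      have hv := ((mem_Kker M).mp hXj).2
      have hsingle : toVecL (X ^ (j : ℕ) : ℝ[X]) = Pi.single j 1 := by
        funext i
        rw [toVecL_apply, coeff_X_pow, Pi.single_apply]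
        by_cases h : i = j
        · subst h; simp
        · have h' : (i : ℕ) ≠ (j : ℕ) := fun hh => h (Fin.ext hh)
          simp [h, h']
      rwa [hsingle] at hv
    apply hM0
    ext i j
    have h1 := congrFun (hcols j) i
    rw [Matrix.mulVec_single] at h1
    simpa using h1
  have hdvd : ∀ n : ℕ, ∀ q, q ∈ Kker M → q.natDegree ≤ n → P ∣ q := by
    intro n
    induction n using Nat.strong_induction_on with
    | _ n ih =>
      intro q hqK hqn
      rcases eq_or_ne q 0 with rfl | hq0
      · exact dvd_zero P
      have hdq : d ≤ q.natDegree := hmin q hqK hq0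
      have hqN : q.natDegree < N := Kker_natDegree_lt M hN hqK
      set j := q.natDegree - d with hjdef
      have hXjP : X ^ j * P ∈ Kker M := hshift' j (by omega)
      have hXjPm : (X ^ j * P).Monic := (monic_X_pow j).mul hPm
      have hXjPdeg : (X ^ j * P).natDegree = q.natDegree := by
        rw [natDegree_mul (pow_ne_zero j X_ne_zero) hP0, natDegree_X_pow, hPdeg]; omega
      set q' := q - C q.leadingCoeff * (X ^ j * P) with hq'def
      have hq'K : q' ∈ Kker M := by
        rw [hq'def, ← smul_eq_C_mul]
        exact Submodule.sub_mem _ hqK (Submodule.smul_mem _ _ hXjP)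
      have hdlt : q'.degree < q.degree := by
        rw [hq'def]
        refine degree_sub_lt ?_ hq0 ?_
        · rw [degree_C_mul (leadingCoeff_ne_zero.mpr hq0), degree_eq_natDegree hq0,
            degree_eq_natDegree hXjPm.ne_zero, hXjPdeg]
        · rw [leadingCoeff_mul, leadingCoeff_C, hXjPm.leadingCoeff, mul_one]
      have hPq' : P ∣ q' := by
        rcases eq_or_ne q' 0 with h0 | h0
        · rw [h0]; exact dvd_zero P
        · have h1 : q'.natDegree < q.natDegree := natDegree_lt_natDegree h0 hdlt
          exact ih (n - 1) (by omega) q' hq'K (by omega)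
      have hqsplit : q = q' + C q.leadingCoeff * (X ^ j * P) := by rw [hq'def]; ring
      rw [hqsplit]
      exact dvd_add hPq' (Dvd.dvd.mul_left (Dvd.intro_left _ rfl) _)
  have hroot : ∃ t : ℝ, P.eval t = 0 := by
    by_contra hno
    push_neg at hno
    obtain ⟨A, B, hPAB, hA0, hAd, hBd⟩ := sos2 P hPm (by omega) hno
    have hLP : Lam N a (P * 1) = 0 :=
      K_orth a hH hPK 1 (by omega) (by rw [natDegree_one]; omega)
    rw [mul_one] at hLP
    have hLA : 0 ≤ Lam N a (A * A) := lam_sq_nonneg a hH hpsd A (by omega)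
    have hLB : 0 ≤ Lam N a (B * B) := lam_sq_nonneg a hH hpsd B (by omega)
    have hsum : Lam N a (A * A) + Lam N a (B * B) = 0 := by
      rw [← lam_add]
      rw [← hPAB]
      exact hLP
    have hA2 : Lam N a (A * A) = 0 := by linarith
    have hAK : A ∈ Kker M :=
      K_of_sq a hH hs hpsd ((natDegree_lt_iff_degree_lt hA0).mp (by omega)) (by omega) hA2
    have := hmin A hAK hA0
    omega
  obtain ⟨t₀, ht₀⟩ := hroot
  refine ⟨t₀, exists_mulVec_eq M hs _ ?_⟩
  intro x hx
  have hxK : fromVec x ∈ Kker M :=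
    (mem_Kker M).mpr ⟨fromVec_degree x, by rw [fromVec_toVec]; exact hx⟩
  have hPx : P ∣ fromVec x := hdvd (fromVec x).natDegree _ hxK le_rfl
  have hev : (fromVec x).eval t₀ = 0 := eval_eq_zero_of_dvd_of_eval_eq_zero hPx ht₀
  rw [fromVec_eval] at hev
  rw [dotProduct, ← hev]
  exact Finset.sum_congr rfl fun i _ => by ring

end WithM
end Hankel

lemma rank_zero_eq_zero {n : Type*} [Fintype n] [DecidableEq n] (M : Matrix n n ℝ)
    (h : M.rank = 0) : M = 0 := by
  rw [Matrix.rank] at h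
  have h1 : LinearMap.range M.mulVecLin = ⊥ := Submodule.finrank_eq_zero.mp h
  ext i j
  have h2 : M.mulVecLin (Pi.single j 1) = 0 := by
    have h3 := LinearMap.mem_range_self M.mulVecLin (Pi.single j 1)
    rw [h1] at h3
    simpa using h3
  have h3 := congrFun h2 i
  rw [Matrix.mulVecLin_apply, Matrix.mulVec_single] at h3
  simpa using h3

lemma decomp {N : ℕ} : ∀ (r : ℕ) (M : Matrix (Fin N) (Fin N) ℝ) (a : ℕ → ℝ),
    (∀ i j : Fin N, M i j = a (i.val + j.val)) →
    (∀ x, 0 ≤ x ⬝ᵥ M *ᵥ x) → M.rank = r →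
    ∃ (lam : Fin r → ℝ) (z : Fin r → Fin N → ℝ),
      (∀ i, 0 < lam i) ∧
      (∀ i, (∃ t : ℝ, z i = fun p : Fin N => t ^ (p : ℕ)) ∨
            (z i = fun p : Fin N => if (p : ℕ) = N - 1 then (1:ℝ) else 0)) ∧
      M = ∑ i, lam i • vecMulVec (z i) (z i) := by
  intro r
  induction r with
  | zero =>
    intro M a hH hpsd hrank
    refine ⟨Fin.elim0, Fin.elim0, fun i => i.elim0, fun i => i.elim0, ?_⟩
    simp only [Finset.univ_eq_empty, Finset.sum_empty]
    exact rank_zero_eq_zero M hrank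
  | succ r ih =>
    intro M a hH hpsd hrank
    have hs : Mᵀ = M := by
      ext i j
      rw [Matrix.transpose_apply, hH, hH, Nat.add_comm]
    have hM0 : M ≠ 0 := by
      intro h
      rw [h, Matrix.rank_zero] at hrank
      exact Nat.succ_ne_zero r hrank.symm
    have hN : 0 < N := by
      by_contra hN0
      push_neg at hN0
      apply hM0
      ext i j
      exact absurd i.isLt (by omega)
    by_cases he : ∃ w, M *ᵥ w = fun p : Fin N => if (p : ℕ) = N - 1 then (1:ℝ) else 0
    · obtain ⟨w, hw⟩ := he
      set z : Fin N → ℝ := fun p => if (p : ℕ) = N - 1 then (1:ℝ) else 0 with hzdef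
      have hz0 : z ≠ 0 := by
        intro h
        have h1 := congrFun h ⟨N - 1, by omega⟩
        rw [hzdef] at h1
        simp at h1
      obtain ⟨hpos, hpsd1, hrank1⟩ := deflate M hs hpsd z w hw hz0
      set lam0 := (w ⬝ᵥ z)⁻¹ with hlam0
      set M₁ := M - lam0 • vecMulVec z z with hM₁def
      have hH1 : ∀ i j : Fin N,
          M₁ i j = (fun k => a k - if k = 2 * N - 2 then lam0 else 0) (i.val + j.val) := by
        intro i j
        have hi := i.isLt
        have hj := j.isLt
        rw [hM₁def, Matrix.sub_apply, Matrix.smul_apply, Matrix.vecMulVec_apply, hH, hzdef]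
        simp only [smul_eq_mul]
        by_cases hij : (i : ℕ) + (j : ℕ) = 2 * N - 2
        · have hi' : (i : ℕ) = N - 1 := by omega
          have hj' : (j : ℕ) = N - 1 := by omega
          rw [if_pos hij, if_pos hi', if_pos hj']
          ring
        · rw [if_neg hij]
          by_cases hi' : (i : ℕ) = N - 1
          · have hj' : ¬(j : ℕ) = N - 1 := fun h => hij (by omega)
            rw [if_pos hi', if_neg hj']
            ring
          · rw [if_neg hi']
            ring
      have hr1 : M₁.rank = r := by omega
      obtain ⟨lam', z', hpos', hshape', hsum'⟩ :=
        ih M₁ (fun k => a k - if k = 2 * N - 2 then lam0 else 0) hH1 hpsd1 hr1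
      refine ⟨Fin.cons lam0 lam', Fin.cons z z', ?_, ?_, ?_⟩
      · intro i
        refine Fin.cases ?_ ?_ i
        · rw [Fin.cons_zero]
          exact inv_pos.mpr hpos
        · intro i'
          rw [Fin.cons_succ]
          exact hpos' i'
      · intro i
        refine Fin.cases ?_ ?_ i
        · rw [Fin.cons_zero]
          right
          rw [hzdef]
        · intro i'
          rw [Fin.cons_succ]
          exact hshape' i'
      · rw [Fin.sum_univ_succ]
        simp only [Fin.cons_zero, Fin.cons_succ]
        rw [← hsum', hM₁def]
        abel
    · obtain ⟨t, w, hw⟩ := key_lemma a hN hH hs hpsd hM0 he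
      set z : Fin N → ℝ := fun p : Fin N => t ^ (p : ℕ) with hzdef
      have hz0 : z ≠ 0 := by
        intro h
        have h1 := congrFun h ⟨0, hN⟩
        rw [hzdef] at h1
        simp at h1
      obtain ⟨hpos, hpsd1, hrank1⟩ := deflate M hs hpsd z w hw hz0
      set lam0 := (w ⬝ᵥ z)⁻¹ with hlam0
      set M₁ := M - lam0 • vecMulVec z z with hM₁def
      have hH1 : ∀ i j : Fin N,
          M₁ i j = (fun k => a k - lam0 * t ^ k) (i.val + j.val) := by
        intro i j
        rw [hM₁def, Matrix.sub_apply, Matrix.smul_apply, Matrix.vecMulVec_apply, hH, hzdef]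
        simp only [smul_eq_mul]
        rw [pow_add]
      have hr1 : M₁.rank = r := by omega
      obtain ⟨lam', z', hpos', hshape', hsum'⟩ :=
        ih M₁ (fun k => a k - lam0 * t ^ k) hH1 hpsd1 hr1
      refine ⟨Fin.cons lam0 lam', Fin.cons z z', ?_, ?_, ?_⟩
      · intro i
        refine Fin.cases ?_ ?_ i
        · rw [Fin.cons_zero]
          exact inv_pos.mpr hpos
        · intro i'
          rw [Fin.cons_succ]
          exact hpos' i'
      · intro i
        refine Fin.cases ?_ ?_ i
        · rw [Fin.cons_zero]
          left
          exact ⟨t, hzdef⟩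
        · intro i'
          rw [Fin.cons_succ]
          exact hshape' i'
      · rw [Fin.sum_univ_succ]
        simp only [Fin.cons_zero, Fin.cons_succ]
        rw [← hsum', hM₁def]
        abel

lemma dot_sum_mulVec {n : Type*} [Fintype n] (x : n → ℝ) {ι : Type*} (s : Finset ι)
    (A : ι → Matrix n n ℝ) :
    x ⬝ᵥ (∑ i ∈ s, A i) *ᵥ x = ∑ i ∈ s, x ⬝ᵥ (A i) *ᵥ x := by
  classical
  induction s using Finset.induction_on with
  | empty => simp
  | insert i s hni ih =>
    rw [Finset.sum_insert hni, Finset.sum_insert hni, Matrix.add_mulVec,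
      dotProduct_add, ih]

end Stmt19

/-- A real Hankel matrix (entries depending only on `i + j`) is positive semidefinite
(in the sense `xᵀ M x ≥ 0` for all real `x`) if and only if it is a positive combination
of `r = rank M` rank-one matrices `z zᵀ`, where each `z` is either a moment vector
`(1, t, t², …, t^{N−1})` or the last standard basis vector `e_{N−1}`. -/
theorem stmt_19 {N : ℕ} (M : Matrix (Fin N) (Fin N) ℝ)
    (a : ℕ → ℝ) (hHankel : ∀ i j : Fin N, M i j = a (i.val + j.val)) :
    (∀ x : Fin N → ℝ, 0 ≤ dotProduct x (M.mulVec x)) ↔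
      ∃ (lam : Fin M.rank → ℝ) (z : Fin M.rank → Fin N → ℝ),
        (∀ i, 0 < lam i) ∧
        (∀ i, (∃ t : ℝ, z i = fun p : Fin N => t ^ (p : ℕ)) ∨
              (z i = fun p : Fin N => if (p : ℕ) = N - 1 then (1 : ℝ) else 0)) ∧
        M = ∑ i, lam i • Matrix.vecMulVec (z i) (z i) := by
  constructor
  · intro hpsd
    exact Stmt19.decomp M.rank M a hHankel hpsd rfl
  · rintro ⟨lam, z, hpos, _, hsum⟩ x
    rw [hsum]
    rw [Stmt19.dot_sum_mulVec]
    refine Finset.sum_nonneg fun i _ => ?_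
    rw [Matrix.smul_mulVec, Stmt19.vecMulVec_mulVec', dotProduct_smul,
      dotProduct_smul]
    rw [smul_eq_mul, smul_eq_mul]
    have h1 : x ⬝ᵥ z i = z i ⬝ᵥ x := dotProduct_comm _ _
    rw [h1]
    have := sq_nonneg (z i ⬝ᵥ x)
    nlinarith [le_of_lt (hpos i), sq_nonneg (z i ⬝ᵥ x)]
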